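/- Let a, b ∈ Homeo({0,1}^ω) be the prefix replacement maps with a² = b³ = 1 satisfying the cylinder containments: [0]a = [11111], [0]b = [1010], [0]b⁻¹ = [110], and for all normal-form words g of length ≥ 2, [0]g ⊆ [111] ∪ [10]. Then for every nontrivial g in ⟨a,b⟩ ≅ C₂ * C₃, the cylinder [0] satisfies [0] ∩ [0]g = ∅; hence C₂ * C₃ is a demonstrative subgroup of Homeo({0,1}^ω) with demonstration set [0]. -/

import Mathlib

/-- Cantor space `{0,1}^ω`. -/
abbrev Cantor : Type := ℕ → Bool

/-- digit 0 -/
def O : Bool := false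
/-- digit 1 -/
def I : Bool := true

/-- Append a finite word as a prefix to an infinite sequence. -/
def capp (w : List Bool) (x : Cantor) : Cantor :=
  fun n => if h : n < w.length then w.get ⟨n, h⟩ else x (n - w.length)

/-- The cylinder set `[w]` of sequences with prefix `w`. -/
def Cyl (w : List Bool) : Set Cantor := {x | ∀ i : Fin w.length, x i = w.get i}

/-- A barrier: every infinite sequence has exactly one prefix in `B`. -/
def IsBarrier (B : Finset (List Bool)) : Prop :=
  ∀ x : Cantor, ∃! w, w ∈ B ∧ x ∈ Cyl w
def NFRel (a b : Equiv.Perm Cantor) (x y : Equiv.Perm Cantor) : Prop :=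
  ¬(x = a ∧ y = a) ∧ ¬((x = b ∨ x = b⁻¹) ∧ (y = b ∨ y = b⁻¹))

def NFP (a b g : Equiv.Perm Cantor) : Prop :=
  g = 1 ∨ ∃ l : List (Equiv.Perm Cantor), l ≠ [] ∧
    (∀ x ∈ l, x = a ∨ x = b ∨ x = b⁻¹) ∧ List.Chain' (NFRel a b) l ∧
    g = l.reverse.prod

lemma foldl_apply (l : List (Equiv.Perm Cantor)) (x : Cantor) :
    l.foldl (fun y g => g y) x = l.reverse.prod x := by
  induction l generalizing x with
  | nil => rfl
  | cons s l ih => simp [ih, List.prod_append]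

lemma NFP_mul (a b : Equiv.Perm Cantor)
    (haa : a * a = 1) (hbb : b * b = b⁻¹) (hbibi : b⁻¹ * b⁻¹ = b)
    (hab : a ≠ b) (habi : a ≠ b⁻¹) :
    ∀ s, (s = a ∨ s = b ∨ s = b⁻¹) → ∀ g, NFP a b g → NFP a b (g * s) := by
  have hrelAB : ∀ y, (y = b ∨ y = b⁻¹) → NFRel a b a y := by
    intro y hy
    constructor
    · rintro ⟨-, h2⟩
      rw [h2] at hy
      rcases hy with h | h
      · exact hab h
      · exact habi h
    · rintro ⟨h, -⟩
      rcases h with h | h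
      · exact hab h
      · exact habi h
  have hrelBA : ∀ x, (x = b ∨ x = b⁻¹) → NFRel a b x a := by
    intro x hx
    constructor
    · rintro ⟨h1, -⟩
      rw [h1] at hx
      rcases hx with h | h
      · exact hab h
      · exact habi h
    · rintro ⟨-, h⟩
      rcases h with h | h
      · exact hab h
      · exact habi h
  have hrelNB : ∀ u r, (u = b ∨ u = b⁻¹) → ¬(r = b ∨ r = b⁻¹) → NFRel a b u r := by
    intro u r hu hr
    constructor
    · rintro ⟨h1, -⟩
      rw [h1] at hu
      rcases hu with h | h
      · exact hab h
      · exact habi h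
    · rintro ⟨-, h⟩
      exact hr h
  intro s hs g hg
  rcases hg with rfl | ⟨l, hne, hmem, hch, rfl⟩
  · right
    refine ⟨[s], by simp, by simpa using hs, List.isChain_singleton s, by simp⟩
  cases l with
  | nil => exact absurd rfl hne
  | cons t rest =>
    have ht := hmem t (List.mem_cons_self)
    have hrestmem := fun x hx => hmem x (List.mem_cons_of_mem t hx)
    have hch' : List.Chain' (NFRel a b) rest := hch.tail
    have hprod : (t :: rest).reverse.prod * s = rest.reverse.prod * (t * s) := by
      simp [List.prod_append, mul_assoc]
    have hcons : NFRel a b s t → NFP a b ((t :: rest).reverse.prod * s) := by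
      intro hrel
      right
      refine ⟨s :: t :: rest, by simp, ?_, hch.cons (by simpa using hrel), by
        simp [List.prod_append, mul_assoc]⟩
      intro x hx
      rw [List.mem_cons] at hx
      rcases hx with h | h
      · exact h ▸ hs
      · exact hmem x h
    have hcancel : t * s = 1 → NFP a b ((t :: rest).reverse.prod * s) := by
      intro h1
      rw [hprod, h1, mul_one]
      cases rest with
      | nil => exact Or.inl rfl
      | cons r rest' =>
        exact Or.inr ⟨r :: rest', by simp, hrestmem, hch', rfl⟩
    have hrepl : ∀ u, (u = a ∨ u = b ∨ u = b⁻¹) → t * s = u →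
        (∀ r ∈ rest.head?, NFRel a b u r) →
        NFP a b ((t :: rest).reverse.prod * s) := by
      intro u hu h1 hrel
      rw [hprod, h1]
      right
      refine ⟨u :: rest, by simp, ?_, List.isChain_cons.mpr ⟨hrel, hch'⟩, by
        simp [List.prod_append, mul_assoc]⟩
      intro x hx
      rw [List.mem_cons] at hx
      rcases hx with h | h
      · exact h ▸ hu
      · exact hrestmem x h
    rcases hs with hs' | hs' | hs' <;> rcases ht with ht' | ht' | ht'
    · exact hcancel (by rw [hs', ht', haa])
    · exact hcons (by rw [hs', ht']; exact hrelAB b (Or.inl rfl))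
    · exact hcons (by rw [hs', ht']; exact hrelAB b⁻¹ (Or.inr rfl))
    · exact hcons (by rw [hs', ht']; exact hrelBA b (Or.inl rfl))
    · -- t = b, s = b : replace by b⁻¹
      refine hrepl b⁻¹ (Or.inr (Or.inr rfl)) (by rw [hs', ht', hbb]) ?_
      intro r hr
      have hrel0 : NFRel a b t r := (List.isChain_cons.mp hch).1 r hr
      exact hrelNB b⁻¹ r (Or.inr rfl) fun h => hrel0.2 ⟨Or.inl ht', h⟩
    · exact hcancel (by rw [hs', ht', inv_mul_cancel])
    · exact hcons (by rw [hs', ht']; exact hrelBA b⁻¹ (Or.inr rfl))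
    · exact hcancel (by rw [hs', ht', mul_inv_cancel])
    · -- t = b⁻¹, s = b⁻¹ : replace by b
      refine hrepl b (Or.inr (Or.inl rfl)) (by rw [hs', ht', hbibi]) ?_
      intro r hr
      have hrel0 : NFRel a b t r := (List.isChain_cons.mp hch).1 r hr
      exact hrelNB b r (Or.inl rfl) fun h => hrel0.2 ⟨Or.inr ht', h⟩

/-- For the prefix replacement maps `a, b` with `a² = b³ = 1`, satisfying
`[0]a = [11111]`, `[0]b = [1010]`, `[0]b⁻¹ = [110]`, and such that every
normal-form word of length ≥ 2 moves `[0]` into `[111] ∪ [10]`, every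
nontrivial element `g` of `⟨a, b⟩` satisfies `[0] ∩ [0]g = ∅`; that is,
`⟨a, b⟩ ≅ C₂ * C₃` is demonstrative with demonstration set `[0]`. -/
theorem demonstration_set_C2C3 (a b : Equiv.Perm Cantor)
    (hac : Continuous ⇑a) (hbc : Continuous ⇑b)
    (ha2 : a ^ 2 = 1) (hb3 : b ^ 3 = 1)
    (h0a : ⇑a '' Cyl [O] = Cyl [I,I,I,I,I])
    (h0b : ⇑b '' Cyl [O] = Cyl [I,O,I,O])
    (h0bi : ⇑b⁻¹ '' Cyl [O] = Cyl [I,I,O])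
    (hnf : ∀ l : List (Equiv.Perm Cantor), 2 ≤ l.length →
      (∀ x ∈ l, x = a ∨ x = b ∨ x = b⁻¹) →
      List.Chain' (fun x y =>
        ¬(x = a ∧ y = a) ∧ ¬((x = b ∨ x = b⁻¹) ∧ (y = b ∨ y = b⁻¹))) l →
      (fun x => l.foldl (fun y g => g y) x) '' Cyl [O] ⊆
        Cyl [I,I,I] ∪ Cyl [I,O]) :
    ∀ g ∈ Subgroup.closure ({a, b} : Set (Equiv.Perm Cantor)), g ≠ 1 →
      Cyl [O] ∩ ⇑g '' Cyl [O] = ∅ := by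
  -- basic group facts
  have haa : a * a = 1 := by rw [← sq]; exact ha2
  have hainv : a⁻¹ = a := inv_eq_of_mul_eq_one_right haa
  have hbbb : b * b * b = 1 := by
    have := hb3; rwa [pow_succ, sq] at this
  have hbb : b * b = b⁻¹ := (inv_eq_of_mul_eq_one_left hbbb).symm
  have hbibi : b⁻¹ * b⁻¹ = b := by
    rw [← mul_inv_rev, hbb, inv_inv]
  -- distinctness of letters, from the cylinder images
  have memI : ∀ (w : List Bool), (∀ c ∈ w, c = I) → (fun _ => I : Cantor) ∈ Cyl w := by
    intro w hw i
    exact (hw _ (w.get_mem i)).symm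
  have hab : a ≠ b := by
    intro h
    have he : Cyl [I,I,I,I,I] = Cyl [I,O,I,O] := by rw [← h0a, ← h0b, h]
    have h1 : (fun _ => I : Cantor) ∈ Cyl [I,O,I,O] :=
      he ▸ memI [I,I,I,I,I] (by intro c hc; fin_cases hc <;> rfl)
    have := h1 ⟨1, by norm_num⟩
    simp [I, O] at this
  have habi : a ≠ b⁻¹ := by
    intro h
    have he : Cyl [I,I,I,I,I] = Cyl [I,I,O] := by rw [← h0a, ← h0bi, h]
    have h1 : (fun _ => I : Cantor) ∈ Cyl [I,I,O] :=
      he ▸ memI [I,I,I,I,I] (by intro c hc; fin_cases hc <;> rfl)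
    have := h1 ⟨2, by norm_num⟩
    simp [I, O] at this
  -- disjointness of [O] from any cylinder starting with I
  have hdisj : ∀ (S : Set Cantor), (∀ x ∈ S, x 0 = I) → Cyl [O] ∩ S = ∅ := by
    intro S hS
    apply Set.eq_empty_iff_forall_notMem.mpr
    rintro x ⟨hx0, hxS⟩
    have e1 : x 0 = O := hx0 ⟨0, by norm_num⟩
    have e2 : x 0 = I := hS x hxS
    rw [e1] at e2
    simp [I, O] at e2
  have hheadI : ∀ (w : List Bool) (x : Cantor), x ∈ Cyl (I :: w) → x 0 = I := by
    intro w x hx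
    exact hx ⟨0, by simp⟩
  -- main induction
  intro g hg hg1
  have hP : NFP a b g := by
    refine Subgroup.closure_induction_right (Or.inl (by simp [NFP])) ?_ ?_ hg
    · intro x _ y hy hx
      refine NFP_mul a b haa hbb hbibi hab habi y ?_ x hx
      rcases hy with h | h
      · exact Or.inl h
      · exact Or.inr (Or.inl h)
    · intro x _ y hy hx
      refine NFP_mul a b haa hbb hbibi hab habi y⁻¹ ?_ x hx
      rcases hy with h | h
      · exact Or.inl (by rw [h, hainv])
      · exact Or.inr (Or.inr (by rw [h]))
  rcases hP with rfl | ⟨l, hne, hmem, hch, hprod⟩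
  · exact absurd rfl hg1
  cases l with
  | nil => exact absurd rfl hne
  | cons s rest =>
    cases rest with
    | nil =>
      -- single letter
      have hgs : g = s := by simpa using hprod
      rcases hmem s (List.mem_cons_self) with h | h | h
      · rw [hgs, h, h0a]; exact hdisj _ (hheadI _)
      · rw [hgs, h, h0b]; exact hdisj _ (hheadI _)
      · rw [hgs, h, h0bi]; exact hdisj _ (hheadI _)
    | cons t rest' =>
      have hlen : 2 ≤ (s :: t :: rest').length := by simp
      have himg := hnf (s :: t :: rest') hlen hmem hch
      have hfun : ⇑g = fun x => (s :: t :: rest').foldl (fun y g => g y) x := by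
        funext x
        rw [foldl_apply, hprod]
      rw [hfun]
      apply hdisj
      intro x hx
      rcases himg hx with h | h
      · exact hheadI _ x h
      · exact hheadI _ x h
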